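/- Let P, Q be probability measures on ℝ^n with finite second moments, uncentered second-moment matrices M₂(P) = E[XX^⊤], M₂(Q) = E[YY^⊤], and scalar second moments m₂(P) = E‖X‖², m₂(Q) = E‖Y‖². Then ‖M₂(P) − M₂(Q)‖_F ≤ √(2(m₂(P) + m₂(Q))) · W₂(P,Q). -/

import Mathlib

open MeasureTheory

/-- 2-Wasserstein distance (Euclidean cost), as the infimum over couplings with
integrable quadratic cost. -/
noncomputable def W2 {E : Type*} [NormedAddCommGroup E] [MeasurableSpace E]
    (P Q : Measure E) : ℝ :=
  Real.sqrt (sInf {c : ℝ | ∃ π : Measure (E × E),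
    π.map Prod.fst = P ∧ π.map Prod.snd = Q ∧
    Integrable (fun p => ‖p.1 - p.2‖ ^ 2) π ∧
    c = ∫ p, ‖p.1 - p.2‖ ^ 2 ∂π})

section Aux

variable {n : ℕ}

local notation "E" => EuclideanSpace ℝ (Fin n)

lemma norm_sq_eq_sum (x : E) : ‖x‖ ^ 2 = ∑ i, (x i) ^ 2 := by
  rw [EuclideanSpace.norm_eq, Real.sq_sqrt (by positivity)]; simp [sq_abs]

lemma abs_apply_le_norm (x : E) (i : Fin n) : |x i| ≤ ‖x‖ := by
  have h1 : (x i) ^ 2 ≤ ‖x‖ ^ 2 := by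
    rw [norm_sq_eq_sum]
    exact Finset.single_le_sum (fun j _ => sq_nonneg (x j)) (Finset.mem_univ i)
  calc |x i| = Real.sqrt ((x i) ^ 2) := (Real.sqrt_sq_eq_abs _).symm
    _ ≤ Real.sqrt (‖x‖ ^ 2) := Real.sqrt_le_sqrt h1
    _ = ‖x‖ := by rw [Real.sqrt_sq (norm_nonneg x)]

/-- Pointwise Cauchy–Schwarz bound for the matrix pairing. -/
lemma ptwise (a : Fin n → Fin n → ℝ) (x y : E) :
    ∑ i, ∑ j, a i j * (x i * x j - y i * y j) ≤
      Real.sqrt (∑ i, ∑ j, (a i j) ^ 2) * (‖x - y‖ * (‖x‖ + ‖y‖)) := by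
  set d : Fin n → ℝ := fun i => x i - y i with hd
  set X := ∑ i, (x i) ^ 2
  set Y := ∑ i, (y i) ^ 2
  set D := ∑ i, (d i) ^ 2
  set cx := ∑ i, x i * d i
  set cy := ∑ i, d i * y i
  have hX : ‖x‖ ^ 2 = X := norm_sq_eq_sum x
  have hY : ‖y‖ ^ 2 = Y := norm_sq_eq_sum y
  have hD : ‖x - y‖ ^ 2 = D := by
    rw [norm_sq_eq_sum (x - y)]
    exact Finset.sum_congr rfl fun i _ => by simp [hd]
  have hb : ∀ i j, x i * x j - y i * y j = x i * d j + d i * y j := by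
    intro i j; simp only [hd]; ring
  -- Cauchy-Schwarz on the double sum
  have hcs : (∑ i, ∑ j, a i j * (x i * d j + d i * y j)) ^ 2 ≤
      (∑ i, ∑ j, (a i j) ^ 2) * (∑ i, ∑ j, (x i * d j + d i * y j) ^ 2) := by
    have := Finset.sum_mul_sq_le_sq_mul_sq Finset.univ
      (fun p : Fin n × Fin n => a p.1 p.2)
      (fun p : Fin n × Fin n => x p.1 * d p.2 + d p.1 * y p.2)
    simpa [Fintype.sum_prod_type] using this
  -- Expansion of the second factor
  have hexp : ∑ i, ∑ j, (x i * d j + d i * y j) ^ 2 = X * D + 2 * (cx * cy) + D * Y := by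
    have h1 : ∑ i, ∑ j, (x i * d j + d i * y j) ^ 2 =
        ∑ i, ∑ j, ((x i) ^ 2 * (d j) ^ 2 + 2 * ((x i * d i) * (d j * y j)) +
          (d i) ^ 2 * (y j) ^ 2) :=
      Finset.sum_congr rfl fun i _ => Finset.sum_congr rfl fun j _ => by ring
    rw [h1]
    simp only [Finset.sum_add_distrib, ← Finset.mul_sum, ← Finset.sum_mul]
    try ring
  have hXn : (0:ℝ) ≤ X := Finset.sum_nonneg fun i _ => sq_nonneg _
  have hYn : (0:ℝ) ≤ Y := Finset.sum_nonneg fun i _ => sq_nonneg _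
  have hDn : (0:ℝ) ≤ D := Finset.sum_nonneg fun i _ => sq_nonneg _
  have hcx : cx ^ 2 ≤ X * D := by
    have := Finset.sum_mul_sq_le_sq_mul_sq Finset.univ (fun i => x i) (fun i => d i)
    simpa using this
  have hcy : cy ^ 2 ≤ D * Y := by
    have := Finset.sum_mul_sq_le_sq_mul_sq Finset.univ (fun i => d i) (fun i => y i)
    simpa using this
  have hcross : cx * cy ≤ ‖x‖ * ‖y‖ * ‖x - y‖ ^ 2 := by
    have h4 : (cx * cy) ^ 2 ≤ (‖x‖ * ‖y‖ * ‖x - y‖ ^ 2) ^ 2 := by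
      have : (cx * cy) ^ 2 = cx ^ 2 * cy ^ 2 := by ring
      rw [this]
      calc cx ^ 2 * cy ^ 2 ≤ (X * D) * (D * Y) :=
            mul_le_mul hcx hcy (sq_nonneg _) (mul_nonneg hXn hDn)
        _ = (‖x‖ * ‖y‖ * ‖x - y‖ ^ 2) ^ 2 := by rw [← hX, ← hY, ← hD]; ring
    have hR : (0:ℝ) ≤ ‖x‖ * ‖y‖ * ‖x - y‖ ^ 2 := by positivity
    calc cx * cy ≤ |cx * cy| := le_abs_self _
      _ = Real.sqrt ((cx * cy) ^ 2) := (Real.sqrt_sq_eq_abs _).symm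
      _ ≤ Real.sqrt ((‖x‖ * ‖y‖ * ‖x - y‖ ^ 2) ^ 2) := Real.sqrt_le_sqrt h4
      _ = ‖x‖ * ‖y‖ * ‖x - y‖ ^ 2 := Real.sqrt_sq hR
  have hSb : ∑ i, ∑ j, (x i * d j + d i * y j) ^ 2 ≤ (‖x - y‖ * (‖x‖ + ‖y‖)) ^ 2 := by
    rw [hexp]
    have : (‖x - y‖ * (‖x‖ + ‖y‖)) ^ 2 =
        ‖x‖ ^ 2 * ‖x - y‖ ^ 2 + 2 * (‖x‖ * ‖y‖ * ‖x - y‖ ^ 2) + ‖x - y‖ ^ 2 * ‖y‖ ^ 2 := by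
      ring
    rw [this, hX, hY, hD]
    rw [hD] at hcross
    linarith [hcross]
  -- Put together
  have hA : (0:ℝ) ≤ ∑ i, ∑ j, (a i j) ^ 2 :=
    Finset.sum_nonneg fun i _ => Finset.sum_nonneg fun j _ => sq_nonneg _
  have hgoal : ∑ i, ∑ j, a i j * (x i * x j - y i * y j) =
      ∑ i, ∑ j, a i j * (x i * d j + d i * y j) :=
    Finset.sum_congr rfl fun i _ => Finset.sum_congr rfl fun j _ => by rw [hb]
  rw [hgoal]
  have hRnn : (0:ℝ) ≤ ‖x - y‖ * (‖x‖ + ‖y‖) := by positivity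
  calc ∑ i, ∑ j, a i j * (x i * d j + d i * y j)
      ≤ |∑ i, ∑ j, a i j * (x i * d j + d i * y j)| := le_abs_self _
    _ = Real.sqrt ((∑ i, ∑ j, a i j * (x i * d j + d i * y j)) ^ 2) :=
        (Real.sqrt_sq_eq_abs _).symm
    _ ≤ Real.sqrt ((∑ i, ∑ j, (a i j) ^ 2) * (∑ i, ∑ j, (x i * d j + d i * y j) ^ 2)) :=
        Real.sqrt_le_sqrt hcs
    _ = Real.sqrt (∑ i, ∑ j, (a i j) ^ 2) *
        Real.sqrt (∑ i, ∑ j, (x i * d j + d i * y j) ^ 2) := Real.sqrt_mul hA _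
    _ ≤ Real.sqrt (∑ i, ∑ j, (a i j) ^ 2) * Real.sqrt ((‖x - y‖ * (‖x‖ + ‖y‖)) ^ 2) := by
        gcongr
    _ = Real.sqrt (∑ i, ∑ j, (a i j) ^ 2) * (‖x - y‖ * (‖x‖ + ‖y‖)) := by
        rw [Real.sqrt_sq hRnn]

lemma integral_fst' {π : Measure (E × E)} {P : Measure E} (h : π.map Prod.fst = P)
    {f : E → ℝ} (hf : Measurable f) : ∫ x, f x ∂P = ∫ p, f p.1 ∂π := by
  rw [← h, integral_map measurable_fst.aemeasurable hf.aestronglyMeasurable]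

lemma integral_snd' {π : Measure (E × E)} {Q : Measure E} (h : π.map Prod.snd = Q)
    {f : E → ℝ} (hf : Measurable f) : ∫ x, f x ∂Q = ∫ p, f p.2 ∂π := by
  rw [← h, integral_map measurable_snd.aemeasurable hf.aestronglyMeasurable]

lemma integrable_fst' {π : Measure (E × E)} {P : Measure E} (h : π.map Prod.fst = P)
    {f : E → ℝ} (hf : Measurable f) (hint : Integrable f P) :
    Integrable (fun p : E × E => f p.1) π := by
  rw [← h] at hint
  exact (integrable_map_measure hf.aestronglyMeasurable measurable_fst.aemeasurable).mp hint

lemma integrable_snd' {π : Measure (E × E)} {Q : Measure E} (h : π.map Prod.snd = Q)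
    {f : E → ℝ} (hf : Measurable f) (hint : Integrable f Q) :
    Integrable (fun p : E × E => f p.2) π := by
  rw [← h] at hint
  exact (integrable_map_measure hf.aestronglyMeasurable measurable_snd.aemeasurable).mp hint

lemma measurable_normsq : Measurable (fun x : E => ‖x‖ ^ 2) :=
  (continuous_norm.pow 2).measurable

lemma coupling_bound (P Q : Measure E) (hP2 : Integrable (fun x => ‖x‖ ^ 2) P)
    (hQ2 : Integrable (fun x => ‖x‖ ^ 2) Q) (π : Measure (E × E))
    (h1 : π.map Prod.fst = P) (h2 : π.map Prod.snd = Q)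
    (hc : Integrable (fun p : E × E => ‖p.1 - p.2‖ ^ 2) π) :
    (∑ i, ∑ j, ((∫ x, x i * x j ∂P) - ∫ y, y i * y j ∂Q) ^ 2) ≤
      (2 * ((∫ x, ‖x‖ ^ 2 ∂P) + ∫ y, ‖y‖ ^ 2 ∂Q)) * ∫ p, ‖p.1 - p.2‖ ^ 2 ∂π := by
  classical
  set a : Fin n → Fin n → ℝ :=
    fun i j => (∫ x, x i * x j ∂P) - ∫ y, y i * y j ∂Q with ha_def
  have hmij : ∀ i j : Fin n, Measurable (fun x : E => x i * x j) :=
    fun i j => Continuous.measurable (by fun_prop)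
  have hx2 : Integrable (fun p : E × E => ‖p.1‖ ^ 2) π :=
    integrable_fst' h1 measurable_normsq hP2
  have hy2 : Integrable (fun p : E × E => ‖p.2‖ ^ 2) π :=
    integrable_snd' h2 measurable_normsq hQ2
  have habs : ∀ (z : E) (i j : Fin n), ‖z i * z j‖ ≤ ‖z‖ ^ 2 := by
    intro z i j
    rw [Real.norm_eq_abs, abs_mul, sq]
    exact mul_le_mul (abs_apply_le_norm z i) (abs_apply_le_norm z j) (abs_nonneg _)
      (norm_nonneg _)
  have hxij : ∀ i j : Fin n, Integrable (fun p : E × E => p.1 i * p.1 j) π := by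
    intro i j
    exact hx2.mono' (((hmij i j).comp measurable_fst).aestronglyMeasurable)
      (ae_of_all _ fun p => habs p.1 i j)
  have hyij : ∀ i j : Fin n, Integrable (fun p : E × E => p.2 i * p.2 j) π := by
    intro i j
    exact hy2.mono' (((hmij i j).comp measurable_snd).aestronglyMeasurable)
      (ae_of_all _ fun p => habs p.2 i j)
  have hgij : ∀ i j : Fin n, Integrable (fun p : E × E => p.1 i * p.1 j - p.2 i * p.2 j) π :=
    fun i j => (hxij i j).sub (hyij i j)
  have ha : ∀ i j : Fin n, a i j = ∫ p, (p.1 i * p.1 j - p.2 i * p.2 j) ∂π := by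
    intro i j
    show (∫ x, x i * x j ∂P) - ∫ y, y i * y j ∂Q = _
    rw [integral_fst' h1 (hmij i j), integral_snd' h2 (hmij i j),
      ← integral_sub (hxij i j) (hyij i j)]
  set L := Real.sqrt (∑ i, ∑ j, (a i j) ^ 2) with hL_def
  have hTnn : (0:ℝ) ≤ ∑ i, ∑ j, (a i j) ^ 2 :=
    Finset.sum_nonneg fun i _ => Finset.sum_nonneg fun j _ => sq_nonneg _
  -- the function g
  set g : E × E → ℝ := fun p => ‖p.1 - p.2‖ * (‖p.1‖ + ‖p.2‖) with hg_def
  have hg_cont : Continuous g :=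
    ((continuous_fst.sub continuous_snd).norm).mul
      ((continuous_fst.norm).add (continuous_snd.norm))
  have hg_int : Integrable g π := by
    refine Integrable.mono' ((hc.div_const 2).add (hx2.add hy2))
      hg_cont.aestronglyMeasurable (ae_of_all _ fun p => ?_)
    have h0 : (0:ℝ) ≤ g p := by
      rw [hg_def]; positivity
    simp only [Pi.add_apply]
    rw [Real.norm_of_nonneg h0, hg_def]
    have := sq_nonneg (‖p.1 - p.2‖ - (‖p.1‖ + ‖p.2‖))
    have := sq_nonneg (‖p.1‖ - ‖p.2‖)
    nlinarith [norm_nonneg (p.1 - p.2), norm_nonneg p.1, norm_nonneg p.2]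
  -- Step 1: ∑ a² ≤ L * ∫ g
  have key1 : (∑ i, ∑ j, (a i j) ^ 2) ≤ L * ∫ p, g p ∂π := by
    have hsum_int : Integrable (fun p : E × E =>
        ∑ i, ∑ j, a i j * (p.1 i * p.1 j - p.2 i * p.2 j)) π := by
      apply integrable_finset_sum
      intro i _
      apply integrable_finset_sum
      intro j _
      exact (hgij i j).const_mul _
    have heq : (∑ i, ∑ j, (a i j) ^ 2) =
        ∫ p, ∑ i, ∑ j, a i j * (p.1 i * p.1 j - p.2 i * p.2 j) ∂π := by
      rw [integral_finset_sum _ (fun i _ => integrable_finset_sum _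
        (fun j _ => (hgij i j).const_mul _))]
      refine Finset.sum_congr rfl fun i _ => ?_
      rw [integral_finset_sum _ (fun j _ => (hgij i j).const_mul _)]
      refine Finset.sum_congr rfl fun j _ => ?_
      rw [integral_const_mul, ← ha i j, sq]
    rw [heq, ← integral_const_mul]
    refine integral_mono hsum_int (hg_int.const_mul L) fun p => ?_
    exact ptwise a p.1 p.2
  -- Step 2: Hölder
  have hconj : Real.HolderConjugate 2 2 := ⟨by norm_num, by norm_num, by norm_num⟩
  have hmemd : MemLp (fun p : E × E => ‖p.1 - p.2‖) (ENNReal.ofReal 2) π := by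
    have : (ENNReal.ofReal 2) = 2 := by norm_num
    rw [this]
    exact (memLp_two_iff_integrable_sq
      ((continuous_fst.sub continuous_snd).norm).aestronglyMeasurable).mpr hc
  have hsum2_int : Integrable (fun p : E × E => (‖p.1‖ + ‖p.2‖) ^ 2) π := by
    refine Integrable.mono' ((hx2.const_mul 2).add (hy2.const_mul 2))
      (((continuous_fst.norm).add (continuous_snd.norm)).pow 2).aestronglyMeasurable
      (ae_of_all _ fun p => ?_)
    simp only [Pi.add_apply]
    rw [Real.norm_of_nonneg (sq_nonneg _)]
    nlinarith [sq_nonneg (‖p.1‖ - ‖p.2‖)]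
  have hmems : MemLp (fun p : E × E => ‖p.1‖ + ‖p.2‖) (ENNReal.ofReal 2) π := by
    have : (ENNReal.ofReal 2) = 2 := by norm_num
    rw [this]
    exact (memLp_two_iff_integrable_sq
      ((continuous_fst.norm).add (continuous_snd.norm)).aestronglyMeasurable).mpr hsum2_int
  have key2 : ∫ p, g p ∂π ≤
      Real.sqrt (∫ p, ‖p.1 - p.2‖ ^ 2 ∂π) * Real.sqrt (∫ p, (‖p.1‖ + ‖p.2‖) ^ 2 ∂π) := by
    have h := integral_mul_le_Lp_mul_Lq_of_nonneg hconj
      (ae_of_all _ fun p : E × E => norm_nonneg (p.1 - p.2))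
      (ae_of_all _ fun p : E × E => add_nonneg (norm_nonneg p.1) (norm_nonneg p.2)) hmemd hmems
    have hrw : ∀ z : ℝ, z ^ (2:ℝ) = z ^ 2 := fun z => by
      rw [show (2:ℝ) = ((2:ℕ):ℝ) by norm_num, Real.rpow_natCast]
    simp only [hrw] at h
    rw [Real.sqrt_eq_rpow, Real.sqrt_eq_rpow]
    exact h
  -- Step 3: second moment bound
  have key3 : ∫ p, (‖p.1‖ + ‖p.2‖) ^ 2 ∂π ≤
      2 * ((∫ x, ‖x‖ ^ 2 ∂P) + ∫ y, ‖y‖ ^ 2 ∂Q) := by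
    have h1' : ∫ x, ‖x‖ ^ 2 ∂P = ∫ p, ‖p.1‖ ^ 2 ∂π := integral_fst' h1 measurable_normsq
    have h2' : ∫ y, ‖y‖ ^ 2 ∂Q = ∫ p, ‖p.2‖ ^ 2 ∂π := integral_snd' h2 measurable_normsq
    rw [h1', h2']
    have : ∫ p, (‖p.1‖ + ‖p.2‖) ^ 2 ∂π ≤ ∫ p, (2 * ‖p.1‖ ^ 2 + 2 * ‖p.2‖ ^ 2) ∂π := by
      refine integral_mono hsum2_int ((hx2.const_mul 2).add (hy2.const_mul 2)) fun p => ?_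
      nlinarith [sq_nonneg (‖p.1‖ - ‖p.2‖)]
    rw [integral_add (hx2.const_mul 2) (hy2.const_mul 2), integral_const_mul,
      integral_const_mul] at this
    linarith
  -- assemble
  set c := ∫ p, ‖p.1 - p.2‖ ^ 2 ∂π with hc_def
  set M := 2 * ((∫ x, ‖x‖ ^ 2 ∂P) + ∫ y, ‖y‖ ^ 2 ∂Q) with hM_def
  have hc0 : 0 ≤ c := integral_nonneg fun p => sq_nonneg _
  have hs0 : 0 ≤ ∫ p, (‖p.1‖ + ‖p.2‖) ^ 2 ∂π := integral_nonneg fun p => sq_nonneg _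
  have hM0 : 0 ≤ M := le_trans hs0 key3
  have hchain : (∑ i, ∑ j, (a i j) ^ 2) ≤ L * (Real.sqrt c * Real.sqrt M) := by
    refine le_trans key1 ?_
    have hLnn : 0 ≤ L := Real.sqrt_nonneg _
    have : ∫ p, g p ∂π ≤ Real.sqrt c * Real.sqrt M := by
      refine le_trans key2 ?_
      exact mul_le_mul_of_nonneg_left (Real.sqrt_le_sqrt key3) (Real.sqrt_nonneg _)
    exact mul_le_mul_of_nonneg_left this hLnn
  -- conclude: T ≤ M * c
  rcases eq_or_lt_of_le hTnn with hT0 | hTpos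
  · rw [← hT0]; exact mul_nonneg hM0 hc0
  · have hLpos : 0 < L := Real.sqrt_pos.mpr hTpos
    have hLL : L * L = ∑ i, ∑ j, (a i j) ^ 2 := Real.mul_self_sqrt hTnn
    have hstep : L ≤ Real.sqrt c * Real.sqrt M := by
      have : L * L ≤ L * (Real.sqrt c * Real.sqrt M) := by rw [hLL]; exact hchain
      exact le_of_mul_le_mul_left this hLpos
    calc (∑ i, ∑ j, (a i j) ^ 2) = L * L := hLL.symm
      _ ≤ (Real.sqrt c * Real.sqrt M) * (Real.sqrt c * Real.sqrt M) :=
          mul_le_mul hstep hstep (le_of_lt hLpos) (by positivity)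
      _ = (Real.sqrt c * Real.sqrt c) * (Real.sqrt M * Real.sqrt M) := by ring
      _ = c * M := by rw [Real.mul_self_sqrt hc0, Real.mul_self_sqrt hM0]
      _ = M * c := mul_comm _ _

end Aux

theorem stmt7 {n : ℕ} (P Q : Measure (EuclideanSpace ℝ (Fin n)))
    [IsProbabilityMeasure P] [IsProbabilityMeasure Q]
    (hP2 : Integrable (fun x => ‖x‖ ^ 2) P) (hQ2 : Integrable (fun x => ‖x‖ ^ 2) Q) :
    Real.sqrt (∑ i, ∑ j, ((∫ x, x i * x j ∂P) - ∫ y, y i * y j ∂Q) ^ 2) ≤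
      Real.sqrt (2 * ((∫ x, ‖x‖ ^ 2 ∂P) + ∫ y, ‖y‖ ^ 2 ∂Q)) * W2 P Q := by
  classical
  set E := EuclideanSpace ℝ (Fin n)
  set S : Set ℝ := {c : ℝ | ∃ π : Measure (E × E),
    π.map Prod.fst = P ∧ π.map Prod.snd = Q ∧
    Integrable (fun p => ‖p.1 - p.2‖ ^ 2) π ∧
    c = ∫ p, ‖p.1 - p.2‖ ^ 2 ∂π} with hS_def
  set T := ∑ i, ∑ j, ((∫ x, x i * x j ∂P) - ∫ y, y i * y j ∂Q) ^ 2 with hT_def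
  set M := 2 * ((∫ x, ‖x‖ ^ 2 ∂P) + ∫ y, ‖y‖ ^ 2 ∂Q) with hM_def
  have hM0 : 0 ≤ M := by
    have h1 : 0 ≤ ∫ x, ‖x‖ ^ 2 ∂P := integral_nonneg fun x => sq_nonneg _
    have h2 : 0 ≤ ∫ y, ‖y‖ ^ 2 ∂Q := integral_nonneg fun y => sq_nonneg _
    positivity
  -- S is nonempty (product coupling)
  have hprod_fst : (P.prod Q).map Prod.fst = P := by
    rw [Measure.map_fst_prod, measure_univ, one_smul]
  have hprod_snd : (P.prod Q).map Prod.snd = Q := by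
    rw [Measure.map_snd_prod, measure_univ, one_smul]
  have hprod_int : Integrable (fun p : E × E => ‖p.1 - p.2‖ ^ 2) (P.prod Q) := by
    have hx2 : Integrable (fun p : E × E => ‖p.1‖ ^ 2) (P.prod Q) :=
      integrable_fst' hprod_fst measurable_normsq hP2
    have hy2 : Integrable (fun p : E × E => ‖p.2‖ ^ 2) (P.prod Q) :=
      integrable_snd' hprod_snd measurable_normsq hQ2
    refine Integrable.mono' ((hx2.const_mul 2).add (hy2.const_mul 2))
      (((continuous_fst.sub continuous_snd).norm.pow 2)).aestronglyMeasurable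
      (ae_of_all _ fun p => ?_)
    simp only [Pi.add_apply]
    rw [Real.norm_of_nonneg (sq_nonneg _)]
    have h := norm_sub_le p.1 p.2
    nlinarith [sq_nonneg (‖p.1‖ - ‖p.2‖), norm_nonneg (p.1 - p.2), norm_nonneg p.1,
      norm_nonneg p.2]
  have hS_ne : S.Nonempty :=
    ⟨∫ p, ‖p.1 - p.2‖ ^ 2 ∂(P.prod Q), P.prod Q, hprod_fst, hprod_snd, hprod_int, rfl⟩
  have hS_bd : ∀ c ∈ S, 0 ≤ c := by
    rintro c ⟨π, -, -, -, rfl⟩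
    exact integral_nonneg fun p => sq_nonneg _
  have hkey : ∀ c ∈ S, T ≤ M * c := by
    rintro c ⟨π, h1, h2, hint, rfl⟩
    exact coupling_bound P Q hP2 hQ2 π h1 h2 hint
  have hT0 : 0 ≤ T :=
    Finset.sum_nonneg fun i _ => Finset.sum_nonneg fun j _ => sq_nonneg _
  have hmain : T ≤ M * sInf S := by
    by_cases hMz : M = 0
    · obtain ⟨c, hc⟩ := hS_ne
      have := hkey c hc
      rw [hMz] at this ⊢
      simpa using this
    · have hMpos : 0 < M := lt_of_le_of_ne hM0 (Ne.symm hMz)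
      have hdiv : T / M ≤ sInf S := by
        refine le_csInf hS_ne fun c hc => ?_
        rw [div_le_iff₀ hMpos]
        calc T ≤ M * c := hkey c hc
          _ = c * M := mul_comm _ _
      calc T = M * (T / M) := by field_simp
        _ ≤ M * sInf S := mul_le_mul_of_nonneg_left hdiv hM0
  have hW : W2 P Q = Real.sqrt (sInf S) := rfl
  rw [hW, ← Real.sqrt_mul hM0]
  exact Real.sqrt_le_sqrt hmain
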